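/- Fix φ̃ > 0. For γ > 0 let P(γ) denote the unique P > 0 satisfying log(1+P·γ) = 1 + (φ̃·γ − 1)/(1+P·γ). Then P is strictly decreasing: if 0 < γ₁ < γ₂ then P(γ₁) > P(γ₂). -/

import Mathlib

open Real Set

private noncomputable def lamG (x : ℝ) : ℝ := x * Real.log x - x + 1

private lemma lamG_hasDeriv {x : ℝ} (hx : 1 < x) :
    HasDerivAt lamG (Real.log x) x := by
  have hx0 : x ≠ 0 := by linarith
  have h1 : HasDerivAt (fun y : ℝ => y * Real.log y) (Real.log x + 1) x := by
    have := (hasDerivAt_id x).mul (Real.hasDerivAt_log hx0)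
    refine this.congr_deriv ?_
    simp [hx0]
  have := (h1.sub (hasDerivAt_id x)).add_const 1
  refine this.congr_deriv ?_
  ring

private lemma lamG_mono : StrictMonoOn lamG (Set.Ici 1) := by
  apply strictMonoOn_of_deriv_pos (convex_Ici 1)
  · apply ContinuousOn.add
    · apply ContinuousOn.sub
      · exact continuousOn_id.mul (Real.continuousOn_log.mono (by
          intro x hx; simp only [Set.mem_Ici] at hx
          simp only [Set.mem_compl_iff, Set.mem_singleton_iff]; linarith))
      · exact continuousOn_id
    · exact continuousOn_const
  · intro x hx
    rw [interior_Ici] at hx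
    rw [(lamG_hasDeriv hx).deriv]
    exact Real.log_pos hx

private lemma lamH_mono :
    StrictMonoOn (fun x => lamG x / (x - 1)) (Set.Ioi 1) := by
  apply strictMonoOn_of_deriv_pos (convex_Ioi 1)
  · apply ContinuousOn.div
    · apply ContinuousOn.add
      · apply ContinuousOn.sub
        · exact continuousOn_id.mul (Real.continuousOn_log.mono (by
            intro x hx; simp only [Set.mem_Ioi] at hx
            simp only [Set.mem_compl_iff, Set.mem_singleton_iff]; linarith))
        · exact continuousOn_id
      · exact continuousOn_const
    · exact continuousOn_id.sub continuousOn_const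
    · intro x hx; simp only [Set.mem_Ioi] at hx; intro h; linarith [sub_eq_zero.mp h]
  · intro x hx
    rw [interior_Ioi] at hx
    have hx' : (1:ℝ) < x := hx
    have hne : x - 1 ≠ 0 := by intro h; linarith [sub_eq_zero.mp h]
    have hd : HasDerivAt (fun y => lamG y / (y - 1))
        ((Real.log x * (x - 1) - lamG x * 1) / (x - 1) ^ 2) x :=
      (lamG_hasDeriv hx').div ((hasDerivAt_id x).sub_const 1) hne
    rw [hd.deriv]
    have hnum : Real.log x * (x - 1) - lamG x * 1 = x - 1 - Real.log x := by
      unfold lamG; ring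
    rw [hnum]
    have hlog : Real.log x < x - 1 := Real.log_lt_sub_one_of_pos (by linarith) (by linarith)
    exact div_pos (by linarith) (by positivity)

theorem lambert_power_decreasing_in_gain
    (φ : ℝ) (hφ : 0 < φ) (P : ℝ → ℝ)
    (hP_pos : ∀ γ : ℝ, 0 < γ → 0 < P γ)
    (hP_eq : ∀ γ : ℝ, 0 < γ →
      Real.log (1 + P γ * γ) = 1 + (φ * γ - 1) / (1 + P γ * γ))
    (hP_unique : ∀ γ : ℝ, 0 < γ → ∀ Q : ℝ, 0 < Q →
      Real.log (1 + Q * γ) = 1 + (φ * γ - 1) / (1 + Q * γ) → Q = P γ) :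
    ∀ γ₁ γ₂ : ℝ, 0 < γ₁ → γ₁ < γ₂ → P γ₂ < P γ₁ := by
  intro γ₁ γ₂ hγ₁ h12
  have hγ₂ : 0 < γ₂ := lt_trans hγ₁ h12
  set x₁ := 1 + P γ₁ * γ₁ with hx₁def
  set x₂ := 1 + P γ₂ * γ₂ with hx₂def
  have hx₁ : 1 < x₁ := by
    have := mul_pos (hP_pos γ₁ hγ₁) hγ₁; simp [hx₁def]; linarith
  have hx₂ : 1 < x₂ := by
    have := mul_pos (hP_pos γ₂ hγ₂) hγ₂; simp [hx₂def]; linarith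
  -- g(xᵢ) = φ γᵢ
  have key : ∀ γ : ℝ, 0 < γ → lamG (1 + P γ * γ) = φ * γ := by
    intro γ hγ
    have hx : (0:ℝ) < 1 + P γ * γ := by
      have := mul_pos (hP_pos γ hγ) hγ; linarith
    have heq := hP_eq γ hγ
    unfold lamG
    field_simp at heq ⊢
    nlinarith [heq]
  have e₁ : lamG x₁ = φ * γ₁ := key γ₁ hγ₁
  have e₂ : lamG x₂ = φ * γ₂ := key γ₂ hγ₂
  -- x₁ < x₂
  have hxlt : x₁ < x₂ := by
    by_contra h
    push_neg at h
    have : lamG x₂ ≤ lamG x₁ := by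
      rcases eq_or_lt_of_le h with h' | h'
      · rw [h']
      · exact le_of_lt (lamG_mono (le_of_lt hx₂) (le_of_lt hx₁) h')
    rw [e₁, e₂] at this
    nlinarith
  -- h(x₁) < h(x₂)
  have hh := lamH_mono (Set.mem_Ioi.mpr hx₁) (Set.mem_Ioi.mpr hx₂) hxlt
  simp only at hh
  rw [e₁, e₂] at hh
  -- φγ₁/(x₁-1) < φγ₂/(x₂-1) ⟹ (x₂-1)/γ₂ < (x₁-1)/γ₁
  have hd₁ : (0:ℝ) < x₁ - 1 := by linarith
  have hd₂ : (0:ℝ) < x₂ - 1 := by linarith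
  have hcross : φ * γ₁ * (x₂ - 1) < φ * γ₂ * (x₁ - 1) := by
    rw [div_lt_div_iff₀ hd₁ hd₂] at hh
    linarith
  have hP₁ : P γ₁ = (x₁ - 1) / γ₁ := by field_simp [hx₁def]; linarith
  have hP₂ : P γ₂ = (x₂ - 1) / γ₂ := by field_simp [hx₂def]; linarith
  rw [hP₁, hP₂, div_lt_div_iff₀ hγ₂ hγ₁]
  nlinarith
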